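/- arXiv:1912.04417 — 2 statements merged into one kernel-verified Lean document; each statement's English description precedes it below -/
import Mathlib

section
/- Let f be a holomorphic function on the open unit disk 𝔻 with power series f(z) = ∑_{j=0}^∞ a_j z^j. Then ∫_𝔻 |f(z)|² dλ(z) = π ∑_{j=0}^∞ |a_j|²/(j+1), as an equality in [0, ∞]. -/
open MeasureTheory Set Metric
open scoped ENNReal
open Filter AddCircle
open scoped Real

/-- Geometric bound: coefficients of a power series converging on the disk. -/
lemma aux_bound {a : ℕ → ℂ} {ρ : ℝ} (hρ0 : 0 < ρ)
    (h : Summable fun j : ℕ => a j * (ρ : ℂ) ^ j) :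
    ∃ M : ℝ, 0 ≤ M ∧ ∀ j, ‖a j‖ * ρ ^ j ≤ M := by
  have ht : Tendsto (fun j => ‖a j * (ρ : ℂ) ^ j‖) atTop (nhds 0) := by
    simpa using h.tendsto_atTop_zero.norm
  obtain ⟨M, hM⟩ := ht.bddAbove_range
  refine ⟨M, le_trans (by positivity) (hM ⟨0, rfl⟩), fun j => ?_⟩
  have := hM ⟨j, rfl⟩
  simpa [norm_mul, norm_pow, abs_of_pos hρ0] using this

lemma aux_summable1 {a : ℕ → ℂ} {r : ℝ} (hr0 : 0 ≤ r) (hr1 : r < 1)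
    (h : Summable fun j : ℕ => a j * (((r + 1) / 2 : ℝ) : ℂ) ^ j) :
    Summable fun j : ℕ => ‖a j‖ * r ^ j := by
  set ρ : ℝ := (r + 1) / 2 with hρ
  have hρ0 : 0 < ρ := by positivity
  have hrρ : r < ρ := by simp only [hρ]; linarith
  obtain ⟨M, hM0, hM⟩ := aux_bound hρ0 h
  have hq0 : 0 ≤ r / ρ := by positivity
  have hq1 : r / ρ < 1 := (div_lt_one hρ0).2 hrρ
  refine Summable.of_nonneg_of_le (fun j => by positivity) (fun j => ?_)
    (((summable_geometric_of_lt_one hq0 hq1).mul_left M))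
  have hpow : ρ ^ j * (r / ρ) ^ j = r ^ j := by
    rw [← mul_pow, mul_div_cancel₀ _ hρ0.ne']
  have : ‖a j‖ * r ^ j = (‖a j‖ * ρ ^ j) * (r / ρ) ^ j := by
    rw [mul_assoc, hpow]
  rw [this]
  exact mul_le_mul_of_nonneg_right (hM j) (by positivity)

lemma aux_summable2 {a : ℕ → ℂ} {r : ℝ} (hr0 : 0 ≤ r) (hr1 : r < 1)
    (h : Summable fun j : ℕ => a j * (((r + 1) / 2 : ℝ) : ℂ) ^ j) :
    Summable fun j : ℕ => ‖a j‖ ^ 2 * r ^ (2 * j) := by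
  set ρ : ℝ := (r + 1) / 2 with hρ
  have hρ0 : 0 < ρ := by positivity
  have hrρ : r < ρ := by simp only [hρ]; linarith
  obtain ⟨M, hM0, hM⟩ := aux_bound hρ0 h
  have hq0 : 0 ≤ (r / ρ) ^ 2 := by positivity
  have hq1 : (r / ρ) ^ 2 < 1 := by
    have : r / ρ < 1 := (div_lt_one hρ0).2 hrρ
    nlinarith [div_nonneg hr0 hρ0.le]
  refine Summable.of_nonneg_of_le (fun j => by positivity) (fun j => ?_)
    (((summable_geometric_of_lt_one hq0 hq1).mul_left (M ^ 2)))
  have hpow : ρ ^ j * (r / ρ) ^ j = r ^ j := by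
    rw [← mul_pow, mul_div_cancel₀ _ hρ0.ne']
  have key : ‖a j‖ ^ 2 * r ^ (2 * j) = (‖a j‖ * ρ ^ j) ^ 2 * ((r / ρ) ^ 2) ^ j := by
    have h1 : ((r / ρ) ^ 2) ^ j = ((r / ρ) ^ j) ^ 2 := by
      rw [← pow_mul, ← pow_mul, mul_comm]
    have h2 : r ^ (2 * j) = (r ^ j) ^ 2 := by rw [mul_comm, pow_mul]
    rw [h1, h2, ← hpow]
    ring
  rw [key]
  exact mul_le_mul_of_nonneg_right (pow_le_pow_left₀ (by positivity) (hM j) 2) (by positivity)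

lemma fourier_haar_integral {T : ℝ} [hT : Fact (0 < T)] (m : ℤ) :
    ∫ t : AddCircle T, fourier m t ∂haarAddCircle = if m = 0 then 1 else 0 := by
  split_ifs with h
  · subst h
    have : ⇑(@fourier T 0) = (fun _ => 1 : AddCircle T → ℂ) := by ext1; exact fourier_zero
    rw [this, integral_const, probReal_univ, one_smul]
  · exact integral_eq_zero_of_add_right_eq_neg (fourier_add_half_inv_index h hT.elim)

lemma fourier_natCast_pow {T : ℝ} (j : ℕ) (x : AddCircle T) :
    fourier (j : ℤ) x = (toCircle x : ℂ) ^ j := by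
  induction j with
  | zero => simpa using fourier_zero (x := x)
  | succ n ih =>
      have : ((n : ℤ) + 1) = ((n + 1 : ℕ) : ℤ) := by push_cast; ring
      rw [← this, fourier_add, ih, fourier_one, pow_succ]

lemma im_zero_null : (volume : Measure ℂ) {z : ℂ | z.im = 0} = 0 := by
  have hB : (volume : Measure (ℝ × ℝ))
      ((LinearMap.ker (LinearMap.snd ℝ ℝ ℝ) : Submodule ℝ (ℝ × ℝ)) : Set (ℝ × ℝ)) = 0 := by
    apply Measure.addHaar_submodule
    rw [Ne, LinearMap.ker_eq_top]
    intro h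
    have : (LinearMap.snd ℝ ℝ ℝ) (0, 1) = (0 : ℝ × ℝ →ₗ[ℝ] ℝ) (0, 1) := by rw [h]
    simp at this
  have hmeas : MeasurableSet
      ((LinearMap.ker (LinearMap.snd ℝ ℝ ℝ) : Submodule ℝ (ℝ × ℝ)) : Set (ℝ × ℝ)) :=
    (Submodule.closed_of_finiteDimensional _).measurableSet
  have := Complex.volume_preserving_equiv_real_prod.measure_preimage
    (s := ((LinearMap.ker (LinearMap.snd ℝ ℝ ℝ) : Submodule ℝ (ℝ × ℝ)) : Set (ℝ × ℝ)))
    hmeas.nullMeasurableSet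
  have hpre : Complex.measurableEquivRealProd ⁻¹'
      ((LinearMap.ker (LinearMap.snd ℝ ℝ ℝ) : Submodule ℝ (ℝ × ℝ)) : Set (ℝ × ℝ))
      = {z : ℂ | z.im = 0} := by
    ext z
    simp [Complex.measurableEquivRealProd, Complex.equivRealProd, LinearMap.mem_ker]
  rw [hpre] at this
  rw [this, hB]

lemma slitPlane_compl_null : (volume : Measure ℂ) Complex.slitPlaneᶜ = 0 := by
  refine measure_mono_null (fun z hz => ?_) im_zero_null
  simp only [mem_compl_iff, Complex.mem_slitPlane_iff, not_or, not_lt, ne_eq, not_not] at hz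
  exact hz.2

lemma lintegral_ball_polar (g : ℂ → ℝ≥0∞) :
    ∫⁻ z in ball (0 : ℂ) 1, g z
      = ∫⁻ p in Ioo (0 : ℝ) 1 ×ˢ Ioo (-π) π,
          ENNReal.ofReal p.1 * g (Complex.polarCoord.symm p) := by
  set s : Set (ℝ × ℝ) := Ioo (0 : ℝ) 1 ×ˢ Ioo (-π) π with hs
  have hs_meas : MeasurableSet s := (isOpen_Ioo.prod isOpen_Ioo).measurableSet
  have hsub : s ⊆ polarCoord.target := by
    rw [polarCoord_target]
    exact Set.prod_mono (Ioo_subset_Ioi_self) subset_rfl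
  -- step 1: ball ≃ᵐ slitPlane ∩ ball
  have hae : (Complex.slitPlane ∩ ball (0 : ℂ) 1 : Set ℂ) =ᵐ[volume] ball (0 : ℂ) 1 := by
    rw [Filter.eventuallyEq_set]
    have hs' : ∀ᵐ z : ℂ, z ∈ Complex.slitPlane := by
      rw [MeasureTheory.ae_iff]
      exact slitPlane_compl_null
    filter_upwards [hs'] with z hz
    simp [hz]
  rw [← setLIntegral_congr hae]
  -- step 2: slitPlane ∩ ball = Complex.polarCoord.symm '' s
  have himage : Complex.polarCoord.symm '' s = Complex.slitPlane ∩ ball (0 : ℂ) 1 := by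
    rw [Complex.polarCoord.symm_image_eq_source_inter_preimage hsub,
      Complex.polarCoord_source]
    ext z
    simp only [mem_inter_iff, mem_preimage, and_congr_right_iff]
    intro hz
    have hz0 : z ≠ 0 := by
      rintro rfl
      simp [Complex.mem_slitPlane_iff] at hz
    have harg1 : -π < Complex.arg z := Complex.neg_pi_lt_arg z
    have harg2 : Complex.arg z < π := by
      rw [Complex.arg_lt_pi_iff]
      rcases Complex.mem_slitPlane_iff.1 hz with h | h
      · exact Or.inl h.le
      · exact Or.inr h
    have habs : 0 < ‖z‖ := norm_pos_iff.mpr hz0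
    show Complex.polarCoord z ∈ s ↔ _
    rw [Complex.polarCoord_apply, mem_ball_zero_iff]
    constructor
    · intro h
      exact h.1.2
    · intro h
      exact ⟨⟨habs, h⟩, harg1, harg2⟩
  rw [← himage]
  -- step 3: transfer to ℝ × ℝ via the measurable equiv
  have hcoe : ∀ p : ℝ × ℝ, Complex.measurableEquivRealProd.symm (polarCoord.symm p)
      = Complex.polarCoord.symm p := by
    intro p
    rw [Complex.polarCoord_symm_apply]
    show Complex.measurableEquivRealProd.symm (p.1 * Real.cos p.2, p.1 * Real.sin p.2) = _
    rw [Complex.measurableEquivRealProd_symm_apply]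
    apply Complex.ext <;> simp [Complex.cos_ofReal_re, Complex.sin_ofReal_re]
  have htrans := (MeasurePreserving.symm _
      Complex.volume_preserving_equiv_real_prod).setLIntegral_comp_emb
    Complex.measurableEquivRealProd.symm.measurableEmbedding g (polarCoord.symm '' s)
  have himg2 : Complex.measurableEquivRealProd.symm '' (polarCoord.symm '' s)
      = Complex.polarCoord.symm '' s := by
    rw [Set.image_image]
    exact Set.image_congr fun p _ => hcoe p
  rw [himg2] at htrans
  rw [← htrans]
  -- step 4: Jacobian change of variables in ℝ × ℝ
  set B : ℝ × ℝ → ℝ × ℝ →L[ℝ] ℝ × ℝ := fun p =>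
    LinearMap.toContinuousLinearMap (Matrix.toLin (Module.Basis.finTwoProd ℝ) (Module.Basis.finTwoProd ℝ)
      !![Real.cos p.2, -p.1 * Real.sin p.2; Real.sin p.2, p.1 * Real.cos p.2]) with hB
  have A : ∀ p ∈ s, HasFDerivWithinAt polarCoord.symm (B p) s p := fun p _ =>
    (hasFDerivAt_polarCoord_symm p).hasFDerivWithinAt
  have B_det : ∀ p, (B p).det = p.1 := by
    intro p
    conv_rhs => rw [← one_mul p.1, ← Real.cos_sq_add_sin_sq p.2]
    simp only [hB, neg_mul, LinearMap.det_toContinuousLinearMap, LinearMap.det_toLin,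
      Matrix.det_fin_two_of, sub_neg_eq_add]
    ring
  have hinj : InjOn polarCoord.symm s := by
    have h1 : InjOn polarCoord.symm polarCoord.symm.source := polarCoord.symm.injOn
    rw [OpenPartialHomeomorph.symm_source] at h1
    exact h1.mono hsub
  rw [lintegral_image_eq_lintegral_abs_det_fderiv_mul volume hs_meas A hinj
      (fun p => g (Complex.measurableEquivRealProd.symm p))]
  apply setLIntegral_congr_fun_ae hs_meas
  filter_upwards with p hp
  rw [B_det, abs_of_pos hp.1.1, hcoe p]

section circle

variable (f : ℂ → ℂ) (a : ℕ → ℂ)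

lemma circle_parseval
    (hf : DifferentiableOn ℂ f (ball (0 : ℂ) 1))
    (ha : ∀ z ∈ ball (0 : ℂ) 1, HasSum (fun j : ℕ => a j * z ^ j) (f z))
    {r : ℝ} (hr0 : 0 < r) (hr1 : r < 1) :
    ∫⁻ θ in Ioo (-π) π, (‖f ((r : ℂ) * Complex.exp (θ * Complex.I))‖₊ : ℝ≥0∞) ^ 2
      = ENNReal.ofReal (2 * π * ∑' j : ℕ, ‖a j‖ ^ 2 * r ^ (2 * j)) := by
  haveI : Fact (0 < 2 * π) := ⟨by positivity⟩
  -- summability facts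
  have hρmem : ((((r + 1) / 2 : ℝ)) : ℂ) ∈ ball (0 : ℂ) 1 := by
    rw [mem_ball_zero_iff, Complex.norm_real, Real.norm_of_nonneg (by positivity)]
    linarith
  have hsummρ : Summable fun j : ℕ => a j * (((r + 1) / 2 : ℝ) : ℂ) ^ j :=
    (ha _ hρmem).summable
  have S1 := aux_summable1 hr0.le hr1 hsummρ
  have S2 := aux_summable2 hr0.le hr1 hsummρ
  -- the function on the circle
  have hmem : ∀ x : AddCircle (2 * π), (r : ℂ) * (toCircle x : ℂ) ∈ ball (0 : ℂ) 1 := by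
    intro x
    rw [mem_ball_zero_iff, norm_mul, Complex.norm_real, Real.norm_of_nonneg hr0.le]
    rw [Circle.norm_coe, mul_one]
    exact hr1
  have hcontmul : Continuous fun x : AddCircle (2 * π) => (r : ℂ) * (toCircle x : ℂ) :=
    continuous_const.mul (continuous_subtype_val.comp continuous_toCircle)
  have Fcont : Continuous fun x : AddCircle (2 * π) => f ((r : ℂ) * (toCircle x : ℂ)) :=
    hf.continuousOn.comp_continuous hcontmul hmem
  set F : C(AddCircle (2 * π), ℂ) := ⟨_, Fcont⟩ with hFdef
  -- pointwise expansion
  have hF : ∀ x : AddCircle (2 * π),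
      HasSum (fun j : ℕ => a j * (r : ℂ) ^ j * fourier (j : ℤ) x) (F x) := by
    intro x
    have h0 := ha _ (hmem x)
    have : (fun j : ℕ => a j * ((r : ℂ) * (toCircle x : ℂ)) ^ j)
        = fun j : ℕ => a j * (r : ℂ) ^ j * fourier (j : ℤ) x := by
      funext j
      rw [mul_pow, fourier_natCast_pow]
      ring
    rwa [this] at h0
  -- nnnorm of terms
  have hterm_norm : ∀ (j : ℕ) (m : ℤ) (t : AddCircle (2 * π)),
      (‖a j * (r : ℂ) ^ j * fourier m t‖₊ : ℝ≥0∞) = (‖a j * (r : ℂ) ^ j‖₊ : ℝ≥0∞) := by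
    intro j m t
    have h1 : ‖fourier m t‖₊ = 1 := by
      have : ‖fourier m t‖ = 1 := by rw [fourier_apply]; exact Circle.norm_coe _
      ext
      simp only [coe_nnnorm, this, NNReal.coe_one]
    rw [nnnorm_mul, h1, mul_one]
  -- summability of nnnorms
  have hsum_nn : Summable fun j : ℕ => ‖a j * (r : ℂ) ^ j‖₊ := by
    rw [← NNReal.summable_coe]
    refine S1.congr fun j => ?_
    simp [coe_nnnorm, norm_mul, norm_pow, Complex.norm_real, Real.norm_of_nonneg hr0.le]
  have hsum_nn_top : (∑' j : ℕ, (‖a j * (r : ℂ) ^ j‖₊ : ℝ≥0∞)) ≠ ⊤ :=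
    ENNReal.tsum_coe_ne_top_iff_summable.2 hsum_nn
  -- Fourier coefficients
  have hcoeff : ∀ n : ℤ, fourierCoeff (⇑F) n
      = if 0 ≤ n then a n.toNat * (r : ℂ) ^ n.toNat else 0 := by
    intro n
    have hint : ∀ t : AddCircle (2 * π), fourier (-n) t • F t
        = ∑' j : ℕ, a j * (r : ℂ) ^ j * fourier (-n + (j : ℤ)) t := by
      intro t
      have h3 := (hF t).mul_left (fourier (-n) t)
      have h4 : (fun j : ℕ => fourier (-n) t * (a j * (r : ℂ) ^ j * fourier (j : ℤ) t))
          = fun j : ℕ => a j * (r : ℂ) ^ j * fourier (-n + (j : ℤ)) t := by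
        funext j
        rw [fourier_add]
        ring
      rw [h4] at h3
      rw [smul_eq_mul, ← h3.tsum_eq]
    rw [fourierCoeff]
    simp_rw [hint]
    rw [integral_tsum (f := fun j t => a j * (r : ℂ) ^ j * fourier (-n + (j : ℤ)) t) (fun j => ((continuous_const.mul
        (map_continuous (fourier _))).aestronglyMeasurable))
      (by
        simp_rw [enorm_eq_nnnorm, hterm_norm]
        simpa [lintegral_const] using hsum_nn_top)]
    have hterm_int : ∀ j : ℕ, (∫ t : AddCircle (2 * π),
        a j * (r : ℂ) ^ j * fourier (-n + (j : ℤ)) t ∂haarAddCircle)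
        = a j * (r : ℂ) ^ j * (if -n + (j : ℤ) = 0 then 1 else 0) := by
      intro j
      rw [integral_const_mul, fourier_haar_integral]
    simp_rw [hterm_int]
    by_cases hn : 0 ≤ n
    · rw [if_pos hn, tsum_eq_single n.toNat]
      · rw [if_pos (by rw [Int.toNat_of_nonneg hn]; ring), mul_one]
      · intro j hj
        rw [if_neg, mul_zero]
        intro hcontra
        apply hj
        have : (j : ℤ) = n := by linarith [hcontra]
        omega
    · rw [if_neg hn]
      rw [tsum_eq_single 0]
      · rw [if_neg (by omega), mul_zero]
      · intro j _
        rw [if_neg (by omega), mul_zero]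
  -- Parseval
  set FL : Lp ℂ 2 (@haarAddCircle (2 * π) _) :=
    ContinuousMap.toLp (E := ℂ) 2 haarAddCircle ℂ F with hFL
  have hpars := tsum_sq_fourierCoeff FL
  have hR : ∫ t : AddCircle (2 * π), ‖FL t‖ ^ 2 ∂haarAddCircle
      = ∫ t : AddCircle (2 * π), ‖F t‖ ^ 2 ∂haarAddCircle := by
    apply integral_congr_ae
    filter_upwards [ContinuousMap.coeFn_toLp (𝕜 := ℂ) (p := 2) haarAddCircle F] with t ht
    rw [hFL, ht]
  rw [hR] at hpars
  have hC : ∀ n : ℤ, fourierCoeff (FL : AddCircle (2 * π) → ℂ) n = fourierCoeff (⇑F) n := by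
    intro n
    rw [hFL]
    exact fourierCoeff_toLp F n
  simp_rw [hC] at hpars
  -- identify the LHS of Parseval
  have hLHS : (∑' n : ℤ, ‖fourierCoeff (⇑F) n‖ ^ 2)
      = ∑' j : ℕ, ‖a j‖ ^ 2 * r ^ (2 * j) := by
    rw [← Function.Injective.tsum_eq (Nat.cast_injective : Function.Injective (Nat.cast : ℕ → ℤ))
        (f := fun n : ℤ => ‖fourierCoeff (⇑F) n‖ ^ 2) ?_]
    · apply tsum_congr
      intro j
      rw [hcoeff, if_pos (Int.natCast_nonneg j), Int.toNat_natCast]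
      rw [norm_mul, norm_pow, Complex.norm_real, Real.norm_of_nonneg hr0.le, mul_pow,
        ← pow_mul, mul_comm (j : ℕ) 2]
    · intro n hn
      simp only [Function.mem_support, ne_eq] at hn
      by_contra hmem'
      apply hn
      have hneg : ¬ (0 ≤ n) := by
        intro h0
        exact hmem' ⟨n.toNat, Int.toNat_of_nonneg h0⟩
      rw [hcoeff, if_neg hneg]
      simp
  rw [hLHS] at hpars
  -- interval integral over (-π, π]
  have hIoc : ∫ θ in Ioc (-π) π, ‖f ((r : ℂ) * Complex.exp (θ * Complex.I))‖ ^ 2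
      = 2 * π * ∑' j : ℕ, ‖a j‖ ^ 2 * r ^ (2 * j) := by
    have hFcoe : ∀ θ : ℝ, F (θ : AddCircle (2 * π))
        = f ((r : ℂ) * Complex.exp (θ * Complex.I)) := by
      intro θ
      show f ((r : ℂ) * (toCircle (θ : AddCircle (2 * π)) : ℂ)) = _
      congr 1
      rw [toCircle_apply_mk, show (2 * π / (2 * π) * θ) = θ by
        rw [div_self (by positivity : (2 * π : ℝ) ≠ 0), one_mul], Circle.coe_exp]
    have hII := AddCircle.intervalIntegral_preimage (2 * π) (-π)
      (fun t : AddCircle (2 * π) => ‖F t‖ ^ 2)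
    rw [show -π + 2 * π = π by ring] at hII
    rw [intervalIntegral.integral_of_le (by linarith [Real.pi_pos])] at hII
    have hvol : ∫ t : AddCircle (2 * π), ‖F t‖ ^ 2
        = 2 * π * ∑' j : ℕ, ‖a j‖ ^ 2 * r ^ (2 * j) := by
      rw [AddCircle.volume_eq_smul_haarAddCircle, integral_smul_measure,
        ENNReal.toReal_ofReal (by positivity), hpars, smul_eq_mul]
    rw [hvol] at hII
    rw [← hII]
    apply setIntegral_congr_fun measurableSet_Ioc
    intro θ _
    simp only [hFcoe]
  -- convert to lintegral
  have hcont2 : Continuous fun θ : ℝ => ‖f ((r : ℂ) * Complex.exp (θ * Complex.I))‖ ^ 2 := by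
    have hc3 : Continuous fun θ : ℝ => (r : ℂ) * Complex.exp (θ * Complex.I) := by
      continuity
    have hmem3 : ∀ θ : ℝ, (r : ℂ) * Complex.exp (θ * Complex.I) ∈ ball (0 : ℂ) 1 := by
      intro θ
      rw [mem_ball_zero_iff, norm_mul, Complex.norm_real, Real.norm_of_nonneg hr0.le,
        Complex.norm_exp_ofReal_mul_I, mul_one]
      exact hr1
    exact ((hf.continuousOn.comp_continuous hc3 hmem3).norm.pow 2)
  have hintg : IntegrableOn (fun θ : ℝ => ‖f ((r : ℂ) * Complex.exp (θ * Complex.I))‖ ^ 2)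
      (Ioo (-π) π) := (hcont2.integrableOn_Icc).mono_set Ioo_subset_Icc_self
  have hlhs : ∫⁻ θ in Ioo (-π) π, (‖f ((r : ℂ) * Complex.exp (θ * Complex.I))‖₊ : ℝ≥0∞) ^ 2
      = ∫⁻ θ in Ioo (-π) π,
          ENNReal.ofReal (‖f ((r : ℂ) * Complex.exp (θ * Complex.I))‖ ^ 2) := by
    apply lintegral_congr
    intro θ
    rw [← enorm_eq_nnnorm, ← ofReal_norm, ← ENNReal.ofReal_pow (norm_nonneg _)]
  rw [hlhs, ← ofReal_integral_eq_lintegral_ofReal hintg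
      (Filter.Eventually.of_forall fun θ => by positivity),
    ← integral_Ioc_eq_integral_Ioo, hIoc]

end circle

lemma pow_lintegral (n : ℕ) :
    ∫⁻ r in Ioo (0:ℝ) 1, ENNReal.ofReal (r ^ n) = ENNReal.ofReal (((n : ℝ) + 1)⁻¹) := by
  have hint : IntegrableOn (fun r : ℝ => r ^ n) (Ioo (0:ℝ) 1) :=
    ((continuous_pow n).integrableOn_Icc).mono_set Ioo_subset_Icc_self
  rw [← ofReal_integral_eq_lintegral_ofReal hint (by
      filter_upwards [ae_restrict_mem measurableSet_Ioo] with r hr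
      exact pow_nonneg hr.1.le n)]
  congr 1
  rw [← integral_Ioc_eq_integral_Ioo, ← intervalIntegral.integral_of_le (by norm_num : (0:ℝ) ≤ 1),
    integral_pow]
  norm_num

theorem stmt10 (f : ℂ → ℂ) (a : ℕ → ℂ)
    (hf : DifferentiableOn ℂ f (ball (0 : ℂ) 1))
    (ha : ∀ z ∈ ball (0 : ℂ) 1, HasSum (fun j : ℕ => a j * z ^ j) (f z)) :
    ∫⁻ z in ball (0 : ℂ) 1, (‖f z‖₊ : ℝ≥0∞) ^ 2
      = ENNReal.ofReal Real.pi *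
        ∑' j : ℕ, (‖a j‖₊ : ℝ≥0∞) ^ 2 / ((j : ℝ≥0∞) + 1) := by
  have hπ := Real.pi_pos
  -- polar coordinates
  rw [lintegral_ball_polar (fun z => (‖f z‖₊ : ℝ≥0∞) ^ 2)]
  have hφ : ∀ p : ℝ × ℝ, (Complex.polarCoord.symm p : ℂ)
      = ((p.1 : ℝ) : ℂ) * Complex.exp ((p.2 : ℝ) * Complex.I) := by
    intro p
    rw [Complex.polarCoord_symm_apply, Complex.exp_mul_I]
    simp [Complex.ofReal_cos, Complex.ofReal_sin]
  simp_rw [hφ]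
  -- Tonelli
  have hs_meas : MeasurableSet (Ioo (0:ℝ) 1 ×ˢ Ioo (-π) π) :=
    (isOpen_Ioo.prod isOpen_Ioo).measurableSet
  have hrestrict : ((volume : Measure (ℝ × ℝ)).restrict (Ioo (0:ℝ) 1 ×ˢ Ioo (-π) π))
      = ((volume : Measure ℝ).restrict (Ioo (0:ℝ) 1)).prod
          ((volume : Measure ℝ).restrict (Ioo (-π) π)) := by
    rw [Measure.prod_restrict, ← Measure.volume_eq_prod]
  have hc : Continuous fun p : ℝ × ℝ => ((p.1 : ℝ) : ℂ) * Complex.exp ((p.2 : ℝ) * Complex.I) := by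
    fun_prop
  have hmaps : ∀ p ∈ Ioo (0:ℝ) 1 ×ˢ Ioo (-π) π,
      ((p.1 : ℝ) : ℂ) * Complex.exp ((p.2 : ℝ) * Complex.I) ∈ ball (0 : ℂ) 1 := by
    rintro ⟨r, θ⟩ ⟨hr, hθ⟩
    rw [mem_ball_zero_iff, norm_mul, Complex.norm_real, Real.norm_of_nonneg hr.1.le,
      Complex.norm_exp_ofReal_mul_I, mul_one]
    exact hr.2
  have hmeas : AEMeasurable
      (fun p : ℝ × ℝ => ENNReal.ofReal p.1
        * (‖f (((p.1 : ℝ) : ℂ) * Complex.exp ((p.2 : ℝ) * Complex.I))‖₊ : ℝ≥0∞) ^ 2)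
      (((volume : Measure ℝ).restrict (Ioo (0:ℝ) 1)).prod
          ((volume : Measure ℝ).restrict (Ioo (-π) π))) := by
    rw [← hrestrict]
    have h1 : ContinuousOn
        (fun p : ℝ × ℝ => f (((p.1 : ℝ) : ℂ) * Complex.exp ((p.2 : ℝ) * Complex.I)))
        (Ioo (0:ℝ) 1 ×ˢ Ioo (-π) π) :=
      hf.continuousOn.comp hc.continuousOn hmaps
    exact (measurable_fst.ennreal_ofReal.aemeasurable).mul
      (((h1.aemeasurable hs_meas).nnnorm.coe_nnreal_ennreal).pow_const 2)
  rw [hrestrict, lintegral_prod _ hmeas]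
  -- inner integral via circle parseval
  have hinner : ∀ r ∈ Ioo (0:ℝ) 1,
      (∫⁻ θ in Ioo (-π) π, ENNReal.ofReal r
          * (‖f ((r : ℂ) * Complex.exp ((θ : ℝ) * Complex.I))‖₊ : ℝ≥0∞) ^ 2)
        = ∑' j : ℕ, ENNReal.ofReal (2 * π)
            * ENNReal.ofReal (‖a j‖ ^ 2 * r ^ (2 * j + 1)) := by
    intro r hr
    rw [lintegral_const_mul' _ _ ENNReal.ofReal_ne_top,
      circle_parseval f a hf ha hr.1 hr.2]
    have hρmem : ((((r + 1) / 2 : ℝ)) : ℂ) ∈ ball (0 : ℂ) 1 := by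
      rw [mem_ball_zero_iff, Complex.norm_real,
        Real.norm_of_nonneg (by linarith [hr.1] : (0:ℝ) ≤ (r + 1) / 2)]
      linarith [hr.2]
    have S2 := aux_summable2 hr.1.le hr.2 (ha _ hρmem).summable
    have hS2' : Summable fun j : ℕ => 2 * π * (‖a j‖ ^ 2 * r ^ (2 * j + 1)) := by
      refine ((S2.mul_left (2 * π * r)).congr fun j => ?_)
      rw [pow_succ]
      ring
    rw [← ENNReal.ofReal_mul hr.1.le]
    have harith : r * (2 * π * ∑' j : ℕ, ‖a j‖ ^ 2 * r ^ (2 * j))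
        = ∑' j : ℕ, 2 * π * (‖a j‖ ^ 2 * r ^ (2 * j + 1)) := by
      rw [show r * (2 * π * ∑' j : ℕ, ‖a j‖ ^ 2 * r ^ (2 * j))
          = (2 * π * r) * ∑' j : ℕ, ‖a j‖ ^ 2 * r ^ (2 * j) by ring,
        ← Summable.tsum_mul_left (2 * π * r) S2]
      apply tsum_congr
      intro j
      rw [pow_succ]
      ring
    rw [harith, ENNReal.ofReal_tsum_of_nonneg (fun j => mul_nonneg (by positivity)
      (mul_nonneg (by positivity) (pow_nonneg hr.1.le _))) hS2']
    apply tsum_congr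
    intro j
    rw [ENNReal.ofReal_mul (by positivity : (0:ℝ) ≤ 2 * π)]
  rw [setLIntegral_congr_fun_ae measurableSet_Ioo (ae_of_all _ hinner)]
  rw [lintegral_tsum (fun j => (Measurable.aemeasurable (by
    exact ((((measurable_id.pow_const (2*j+1)).const_mul (‖a j‖^2)).ennreal_ofReal).const_mul
      (ENNReal.ofReal (2 * π))))))]
  -- compute each term
  have hterm : ∀ j : ℕ, ∫⁻ r in Ioo (0:ℝ) 1,
      ENNReal.ofReal (2 * π) * ENNReal.ofReal (‖a j‖ ^ 2 * r ^ (2 * j + 1))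
        = ENNReal.ofReal (2 * π) * (ENNReal.ofReal (‖a j‖ ^ 2)
            * ENNReal.ofReal (((2 * j : ℝ) + 2)⁻¹)) := by
    intro j
    rw [lintegral_const_mul' _ _ ENNReal.ofReal_ne_top]
    congr 1
    have : ∀ r : ℝ, ENNReal.ofReal (‖a j‖ ^ 2 * r ^ (2 * j + 1))
        = ENNReal.ofReal (‖a j‖ ^ 2) * ENNReal.ofReal (r ^ (2 * j + 1)) := fun r =>
      ENNReal.ofReal_mul (by positivity)
    simp_rw [this]
    rw [lintegral_const_mul' _ _ ENNReal.ofReal_ne_top, pow_lintegral (2 * j + 1)]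
    congr 2
    push_cast
    ring
  simp_rw [hterm]
  -- final arithmetic
  rw [← ENNReal.tsum_mul_left]
  apply tsum_congr
  intro j
  have h1 : ((‖a j‖₊ : ℝ≥0∞)) ^ 2 = ENNReal.ofReal (‖a j‖ ^ 2) := by
    rw [ENNReal.ofReal_pow (norm_nonneg _), ofReal_norm, enorm_eq_nnnorm]
  have h2 : ((j : ℝ≥0∞) + 1) = ENNReal.ofReal ((j : ℝ) + 1) := by
    rw [ENNReal.ofReal_add (Nat.cast_nonneg j) zero_le_one, ENNReal.ofReal_natCast,
      ENNReal.ofReal_one]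
  rw [h1, h2, ← ENNReal.ofReal_div_of_pos (by positivity), ← ENNReal.ofReal_mul hπ.le,
    ← ENNReal.ofReal_mul (by positivity : (0:ℝ) ≤ ‖a j‖ ^ 2),
    ← ENNReal.ofReal_mul (by positivity : (0:ℝ) ≤ 2 * π)]
  congr 1
  field_simp
end

section
/- Let α > −1 be real and m ≥ 2 an integer. Then there exists a constant C > 0 such that for every t > 0, 0 ≤ ϖ_{(α,m)}(t) ≤ C · t^{m−1} · √t · e^{−t}. In particular the Laplace transform ∫_0^∞ e^{−λt} ϖ_{(α,m)}(t) dt is finite for every λ > −1. -/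
open MeasureTheory Set

/-- Convolution of functions on `(0,∞)`: `f*g(x) = ∫_0^x f(x−y) g(y) dy`. -/
noncomputable def posConv (f g : ℝ → ℝ) : ℝ → ℝ := fun x =>
  ∫ y in (0 : ℝ)..x, f (x - y) * g y

/-- The function `(√t e^{−ℓt}) * (t^{−1/2} e^{−(α+ℓ)t})`. -/
noncomputable def phiFun (α : ℝ) (ℓ : ℕ) : ℝ → ℝ :=
  posConv (fun t => Real.sqrt t * Real.exp (-(ℓ : ℝ) * t))
    (fun t => Real.exp (-(α + ℓ) * t) / Real.sqrt t)

/-- `ϖ_{(α,m)}`: the convolution of `t ↦ √t e^{−t}` with the `m−1` functions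
`(√t e^{−ℓt}) * (t^{−1/2} e^{−(α+ℓ)t})` for `ℓ = 2, …, m`. -/
noncomputable def varpi (α : ℝ) (m : ℕ) : ℝ → ℝ :=
  (List.range (m - 1)).foldl (fun f k => posConv f (phiFun α (k + 2)))
    (fun t => Real.sqrt t * Real.exp (-t))

/- ### Auxiliary lemmas -/

lemma posConv_eq_zero {f g : ℝ → ℝ} (hf : ∀ t ≤ 0, f t = 0) {t : ℝ} (ht : t ≤ 0) :
    posConv f g t = 0 := by
  unfold posConv
  have h : EqOn (fun y => f (t - y) * g y) (fun _ => (0:ℝ)) (uIcc 0 t) := by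
    intro y hy
    rw [Set.uIcc_of_ge ht] at hy
    have : t - y ≤ 0 := by linarith [hy.1]
    simp [hf (t - y) this]
  rw [intervalIntegral.integral_congr h]
  simp

lemma posConv_nonneg {f g : ℝ → ℝ} (hf : ∀ t, 0 ≤ f t) (hg : ∀ t, 0 ≤ g t) {t : ℝ}
    (ht : 0 ≤ t) : 0 ≤ posConv f g t :=
  intervalIntegral.integral_nonneg ht fun u _ => mul_nonneg (hf _) (hg _)

lemma phiFun_nonneg (α : ℝ) (ℓ : ℕ) (t : ℝ) : 0 ≤ phiFun α ℓ t := by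
  rcases le_or_gt t 0 with ht | ht
  · rw [phiFun, posConv_eq_zero (fun s hs => by
      simp [Real.sqrt_eq_zero'.mpr hs]) ht]
  · exact posConv_nonneg (fun s => mul_nonneg (Real.sqrt_nonneg _) (Real.exp_pos _).le)
      (fun s => div_nonneg (Real.exp_pos _).le (Real.sqrt_nonneg _)) ht.le

lemma posConv_measurable {f g : ℝ → ℝ} (hf : Measurable f) (hg : Measurable g)
    (hf0 : ∀ t ≤ 0, f t = 0) : Measurable (posConv f g) := by
  have heq : posConv f g =
      fun x => ∫ y, (Ioc (0:ℝ) x).indicator (fun y => f (x - y) * g y) y := by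
    funext x
    rcases lt_or_ge 0 x with hx | hx
    · rw [posConv, intervalIntegral.integral_of_le hx.le,
        ← integral_indicator measurableSet_Ioc]
    · rw [posConv_eq_zero hf0 hx, Set.Ioc_eq_empty (by simpa using hx)]
      simp
  rw [heq]
  have hm : Measurable (Set.indicator {p : ℝ × ℝ | 0 < p.2 ∧ p.2 ≤ p.1}
      (fun p : ℝ × ℝ => f (p.1 - p.2) * g p.2)) := by
    refine Measurable.indicator ?_ ?_
    · exact (hf.comp (measurable_fst.sub measurable_snd)).mul (hg.comp measurable_snd)
    · exact (measurableSet_lt measurable_const measurable_snd).inter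
        (measurableSet_le measurable_snd measurable_fst)
  have hsm : StronglyMeasurable (fun p : ℝ × ℝ =>
      (Ioc (0:ℝ) p.1).indicator (fun y => f (p.1 - y) * g y) p.2) := by
    have : (fun p : ℝ × ℝ => (Ioc (0:ℝ) p.1).indicator (fun y => f (p.1 - y) * g y) p.2)
        = Set.indicator {p : ℝ × ℝ | 0 < p.2 ∧ p.2 ≤ p.1}
          (fun p : ℝ × ℝ => f (p.1 - p.2) * g p.2) := by
      funext p
      by_cases h : p.2 ∈ Ioc (0:ℝ) p.1
      · rw [Set.indicator_of_mem h, Set.indicator_of_mem (by simpa [Set.mem_Ioc] using h)]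
      · rw [Set.indicator_of_notMem h, Set.indicator_of_notMem (by simpa [Set.mem_Ioc] using h)]
    rw [this]
    exact hm.stronglyMeasurable
  exact hsm.integral_prod_right'.measurable

lemma phiFun_measurable (α : ℝ) (ℓ : ℕ) : Measurable (phiFun α ℓ) := by
  refine posConv_measurable ?_ ?_ ?_
  · exact (Real.continuous_sqrt.measurable).mul (by fun_prop)
  · exact Measurable.div (by fun_prop) Real.continuous_sqrt.measurable
  · intro t ht; simp [Real.sqrt_eq_zero'.mpr ht]

lemma phiFun_le (α : ℝ) (hα : -1 < α) {ℓ : ℕ} (hℓ : 2 ≤ ℓ) {t : ℝ} (ht : 0 < t) :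
    phiFun α ℓ t ≤ 2 * t * Real.exp (-(1 + (1 + min α 0)) * t) := by
  set ε : ℝ := 1 + min α 0 with hεdef
  have hε0 : 0 < ε := by
    rcases le_total α 0 with h | h
    · simp only [hεdef, min_eq_left h]; linarith
    · simp only [hεdef, min_eq_right h]; norm_num
  have hℓ2 : (2:ℝ) ≤ (ℓ:ℝ) := by exact_mod_cast hℓ
  set F : ℝ → ℝ := fun y =>
    Real.sqrt (t - y) * Real.exp (-(ℓ:ℝ) * (t - y)) * (Real.exp (-(α + ℓ) * y) / Real.sqrt y)
    with hF
  set c : ℝ := Real.sqrt t * Real.exp (-(1 + ε) * t) with hc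
  have hc0 : 0 ≤ c := mul_nonneg (Real.sqrt_nonneg _) (Real.exp_pos _).le
  set G : ℝ → ℝ := fun y => c * y ^ (-(1/2) : ℝ) with hG
  have hGint : IntegrableOn G (Ioc 0 t) := by
    have : IntervalIntegrable (fun x : ℝ => x ^ (-(1/2) : ℝ)) volume 0 t :=
      intervalIntegral.intervalIntegrable_rpow' (by norm_num)
    rw [intervalIntegrable_iff_integrableOn_Ioc_of_le ht.le] at this
    exact this.const_mul c
  have hFG : ∀ y ∈ Ioc (0:ℝ) t, F y ≤ G y := by
    intro y hy
    obtain ⟨hy0, hyt⟩ := hy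
    have hsy : 0 < Real.sqrt y := Real.sqrt_pos.mpr hy0
    have hrw : y ^ (-(1/2) : ℝ) = 1 / Real.sqrt y := by
      rw [Real.sqrt_eq_rpow, Real.rpow_neg hy0.le, one_div]
      norm_num
    have hFeq : F y = Real.sqrt (t - y) * Real.exp (-(ℓ:ℝ) * (t - y) + -(α + ℓ) * y)
        / Real.sqrt y := by
      rw [Real.exp_add]; simp [hF]; ring
    rw [hFeq]
    show _ ≤ c * y ^ (-(1/2) : ℝ)
    rw [hrw, mul_one_div]
    refine div_le_div_of_nonneg_right ?_ hsy.le
    have h1 : Real.sqrt (t - y) ≤ Real.sqrt t := Real.sqrt_le_sqrt (by linarith)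
    have h2 : -(ℓ:ℝ) * (t - y) + -(α + ℓ) * y ≤ -(1 + ε) * t := by
      rcases le_total α 0 with h | h
      · simp only [hεdef, min_eq_left h]
        nlinarith [mul_nonneg (sub_nonneg.mpr hyt) (neg_nonneg.mpr h)]
      · simp only [hεdef, min_eq_right h]
        nlinarith [mul_nonneg h hy0.le, mul_nonneg (sub_nonneg.mpr hℓ2) ht.le]
    calc Real.sqrt (t - y) * Real.exp (-(ℓ:ℝ) * (t - y) + -(α + ℓ) * y)
        ≤ Real.sqrt t * Real.exp (-(1 + ε) * t) :=
          mul_le_mul h1 (Real.exp_le_exp.mpr h2) (Real.exp_pos _).le (Real.sqrt_nonneg _)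
      _ = c := rfl
  have key : phiFun α ℓ t ≤ ∫ y in Ioc (0:ℝ) t, G y := by
    rw [phiFun, posConv, intervalIntegral.integral_of_le ht.le]
    refine integral_mono_of_nonneg ?_ hGint ?_
    · refine Filter.Eventually.of_forall fun y => ?_
      exact mul_nonneg (mul_nonneg (Real.sqrt_nonneg _) (Real.exp_pos _).le)
        (div_nonneg (Real.exp_pos _).le (Real.sqrt_nonneg _))
    · rw [Filter.EventuallyLE, ae_restrict_iff' measurableSet_Ioc]
      exact Filter.Eventually.of_forall fun y hy => hFG y hy
  have hval : ∫ y in Ioc (0:ℝ) t, G y = 2 * t * Real.exp (-(1 + ε) * t) := by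
    rw [← intervalIntegral.integral_of_le ht.le]
    rw [hG, intervalIntegral.integral_const_mul, integral_rpow (Or.inl (by norm_num))]
    rw [Real.zero_rpow (by norm_num)]
    have h12 : (-(1/2) : ℝ) + 1 = 1/2 := by norm_num
    rw [h12, hc, ← Real.sqrt_eq_rpow, sub_zero]
    linear_combination 2 * Real.exp (-(1 + ε) * t) * Real.mul_self_sqrt ht.le
  calc phiFun α ℓ t ≤ ∫ y in Ioc (0:ℝ) t, G y := key
    _ = 2 * t * Real.exp (-(1 + ε) * t) := hval

lemma posConv_step (α : ℝ) (hα : -1 < α) {ℓ : ℕ} (hℓ : 2 ≤ ℓ)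
    {f : ℝ → ℝ} {A : ℝ} {k : ℕ} (hA : 0 ≤ A)
    (hf0 : ∀ t ≤ 0, f t = 0)
    (hfpos : ∀ t, 0 < t → 0 ≤ f t)
    (hfb : ∀ t, 0 < t → f t ≤ A * t ^ k * Real.sqrt t * Real.exp (-t))
    {t : ℝ} (ht : 0 < t) :
    posConv f (phiFun α ℓ) t ≤
      (2 * A / (1 + min α 0)) * t ^ (k + 1) * Real.sqrt t * Real.exp (-t) := by
  set ε : ℝ := 1 + min α 0 with hεdef
  have hε0 : 0 < ε := by
    rcases le_total α 0 with h | h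
    · simp only [hεdef, min_eq_left h]; linarith
    · simp only [hεdef, min_eq_right h]; norm_num
  have hfnn : ∀ s : ℝ, 0 ≤ f s := by
    intro s
    rcases le_or_gt s 0 with hs | hs
    · rw [hf0 s hs]
    · exact hfpos s hs
  set M : ℝ := 2 * A / ε * t ^ k * Real.sqrt t * Real.exp (-t) with hM
  have hfle : ∀ y ∈ Ioc (0:ℝ) t, f (t - y) * phiFun α ℓ y ≤ M := by
    rintro y ⟨hy0, hyt⟩
    have hty : 0 ≤ t - y := by linarith
    have hb1 : f (t - y) ≤ A * (t - y) ^ k * Real.sqrt (t - y) * Real.exp (-(t - y)) := by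
      rcases lt_or_eq_of_le hty with h | h
      · exact hfb _ h
      · rw [← h, hf0 0 le_rfl]
        simp
    have hb2 : phiFun α ℓ y ≤ 2 * y * Real.exp (-(1 + ε) * y) := phiFun_le α hα hℓ hy0
    have hmul : f (t - y) * phiFun α ℓ y ≤
        (A * (t - y) ^ k * Real.sqrt (t - y) * Real.exp (-(t - y))) *
          (2 * y * Real.exp (-(1 + ε) * y)) :=
      mul_le_mul hb1 hb2 (phiFun_nonneg α ℓ y) (by positivity)
    refine hmul.trans ?_
    have hexp : Real.exp (-(t - y)) * Real.exp (-(1 + ε) * y)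
        = Real.exp (-t) * Real.exp (-(ε * y)) := by
      rw [← Real.exp_add, ← Real.exp_add]; ring_nf
    have hye : y * Real.exp (-(ε * y)) ≤ 1 / ε := by
      have h1 : ε * y ≤ Real.exp (ε * y) := by
        have := Real.add_one_le_exp (ε * y); linarith
      have h3 : y ≤ Real.exp (ε * y) / ε := by
        rw [le_div_iff₀ hε0]; nlinarith
      calc y * Real.exp (-(ε * y))
          ≤ (Real.exp (ε * y) / ε) * Real.exp (-(ε * y)) :=
            mul_le_mul_of_nonneg_right h3 (Real.exp_pos _).le
        _ = 1 / ε := by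
            rw [Real.exp_neg]
            field_simp
    have heq2 : (A * (t - y) ^ k * Real.sqrt (t - y) * Real.exp (-(t - y))) *
          (2 * y * Real.exp (-(1 + ε) * y))
        = 2 * A * (t - y) ^ k * Real.sqrt (t - y) * Real.exp (-t) *
          (y * Real.exp (-(ε * y))) := by
      linear_combination (2 * A * (t - y) ^ k * Real.sqrt (t - y) * y) * hexp
    rw [heq2]
    have hfin : 2 * A * (t - y) ^ k * Real.sqrt (t - y) * Real.exp (-t) *
          (y * Real.exp (-(ε * y)))
        ≤ 2 * A * t ^ k * Real.sqrt t * Real.exp (-t) * (1 / ε) := by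
      have q : 2 * A * (t - y) ^ k * Real.sqrt (t - y) ≤ 2 * A * t ^ k * Real.sqrt t := by
        have hp1 : (t - y) ^ k ≤ t ^ k := pow_le_pow_left₀ hty (by linarith) k
        have hp2 : Real.sqrt (t - y) ≤ Real.sqrt t := Real.sqrt_le_sqrt (by linarith)
        have h2A : (0:ℝ) ≤ 2 * A := by linarith
        calc 2 * A * (t - y) ^ k * Real.sqrt (t - y)
            ≤ 2 * A * t ^ k * Real.sqrt (t - y) := by
              have := mul_le_mul_of_nonneg_left hp1 h2A
              exact mul_le_mul_of_nonneg_right this (Real.sqrt_nonneg _)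
          _ ≤ 2 * A * t ^ k * Real.sqrt t := by
              exact mul_le_mul_of_nonneg_left hp2 (by positivity)
      exact mul_le_mul (mul_le_mul_of_nonneg_right q (Real.exp_pos _).le) hye
        (by positivity) (by positivity)
    refine hfin.trans_eq ?_
    rw [hM]; ring
  have hMt : posConv f (phiFun α ℓ) t ≤ M * t := by
    rw [posConv, intervalIntegral.integral_of_le ht.le]
    have hconst : ∫ _ in Ioc (0:ℝ) t, M ∂volume = M * t := by
      rw [setIntegral_const, measureReal_def, Real.volume_Ioc, sub_zero,
        ENNReal.toReal_ofReal ht.le, smul_eq_mul, mul_comm]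
    calc ∫ y in Ioc (0:ℝ) t, f (t - y) * phiFun α ℓ y
        ≤ ∫ _ in Ioc (0:ℝ) t, M ∂volume := by
          refine integral_mono_of_nonneg ?_
            (integrableOn_const measure_Ioc_lt_top.ne) ?_
          · exact Filter.Eventually.of_forall fun y =>
              mul_nonneg (hfnn _) (phiFun_nonneg _ _ _)
          · rw [Filter.EventuallyLE, ae_restrict_iff' measurableSet_Ioc]
            exact Filter.Eventually.of_forall hfle
      _ = M * t := hconst
  refine hMt.trans_eq ?_
  rw [hM, pow_succ]
  ring

lemma stage_props (α : ℝ) (hα : -1 < α) (n : ℕ) :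
    Measurable ((List.range n).foldl (fun f k => posConv f (phiFun α (k + 2)))
        (fun t => Real.sqrt t * Real.exp (-t))) ∧
      (∀ t ≤ 0, (List.range n).foldl (fun f k => posConv f (phiFun α (k + 2)))
        (fun t => Real.sqrt t * Real.exp (-t)) t = 0) ∧
      ∀ t : ℝ, 0 < t →
        0 ≤ (List.range n).foldl (fun f k => posConv f (phiFun α (k + 2)))
          (fun t => Real.sqrt t * Real.exp (-t)) t ∧
        (List.range n).foldl (fun f k => posConv f (phiFun α (k + 2)))
          (fun t => Real.sqrt t * Real.exp (-t)) t ≤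
          (2 / (1 + min α 0)) ^ n * t ^ n * Real.sqrt t * Real.exp (-t) := by
  have hε0 : 0 < 1 + min α 0 := by
    rcases le_total α 0 with h | h
    · simp only [min_eq_left h]; linarith
    · simp only [min_eq_right h]; norm_num
  induction n with
  | zero =>
    refine ⟨by simp only [List.range_zero, List.foldl_nil]; fun_prop, fun t ht => by simp [Real.sqrt_eq_zero'.mpr ht], fun t ht => ?_⟩
    simp only [List.range_zero, List.foldl_nil, pow_zero, one_mul]
    exact ⟨mul_nonneg (Real.sqrt_nonneg _) (Real.exp_pos _).le, le_rfl⟩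
  | succ n ih =>
    obtain ⟨hm, h0, hb⟩ := ih
    rw [List.range_succ, List.foldl_append, List.foldl_cons, List.foldl_nil]
    set F := (List.range n).foldl (fun f k => posConv f (phiFun α (k + 2)))
      (fun t => Real.sqrt t * Real.exp (-t)) with hFdef
    have hfnn : ∀ s : ℝ, 0 ≤ F s := by
      intro s
      rcases le_or_gt s 0 with h | h
      · rw [h0 s h]
      · exact (hb s h).1
    refine ⟨posConv_measurable hm (phiFun_measurable α (n + 2)) h0,
      fun t ht => posConv_eq_zero h0 ht, fun t ht => ⟨?_, ?_⟩⟩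
    · exact posConv_nonneg hfnn (phiFun_nonneg α _) ht.le
    · have key := posConv_step α hα (le_add_self : 2 ≤ n + 2)
        (A := (2 / (1 + min α 0)) ^ n) (k := n) (by positivity) h0
        (fun s hs => (hb s hs).1) (fun s hs => (hb s hs).2) ht
      exact key.trans_eq (by rw [pow_succ]; ring)

theorem stmt17 (α : ℝ) (hα : -1 < α) (m : ℕ) (hm : 2 ≤ m) :
    (∃ C : ℝ, 0 < C ∧ ∀ t : ℝ, 0 < t →
      0 ≤ varpi α m t ∧
      varpi α m t ≤ C * t ^ (m - 1) * Real.sqrt t * Real.exp (-t)) ∧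
    (∀ l : ℝ, -1 < l →
      IntegrableOn (fun t : ℝ => Real.exp (-l * t) * varpi α m t) (Ioi (0 : ℝ)) volume) := by
  have hε0 : 0 < 1 + min α 0 := by
    rcases le_total α 0 with h | h
    · simp only [min_eq_left h]; linarith
    · simp only [min_eq_right h]; norm_num
  obtain ⟨hmeas, h0, hb⟩ := stage_props α hα (m - 1)
  set C : ℝ := (2 / (1 + min α 0)) ^ (m - 1) with hC
  have hC0 : 0 < C := by positivity
  have hbv : ∀ t : ℝ, 0 < t → 0 ≤ varpi α m t ∧
      varpi α m t ≤ C * t ^ (m - 1) * Real.sqrt t * Real.exp (-t) := fun t ht => hb t ht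
  have hmv : Measurable (varpi α m) := hmeas
  constructor
  · exact ⟨C, hC0, hbv⟩
  · intro l hl
    have hb1l : 0 < 1 + l := by linarith
    set g : ℝ → ℝ := fun t => C * (t ^ (((m - 1 : ℕ) : ℝ) + 1 / 2) * Real.exp (-(1 + l) * t))
      with hg
    have hgint : IntegrableOn g (Ioi 0) := by
      have hs : (-1 : ℝ) < ((m - 1 : ℕ) : ℝ) + 1 / 2 := by
        have : (0:ℝ) ≤ ((m - 1 : ℕ) : ℝ) := Nat.cast_nonneg _
        linarith
      have h1 := integrableOn_rpow_mul_exp_neg_mul_rpow hs one_pos hb1l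
      have h2 := h1.const_mul C
      simpa [hg, Real.rpow_one, IntegrableOn] using h2
    refine Integrable.mono hgint ?_ ?_
    · exact ((by fun_prop : Measurable fun t : ℝ => Real.exp (-l * t)).mul
        hmv).aestronglyMeasurable
    · rw [ae_restrict_iff' measurableSet_Ioi]
      refine Filter.Eventually.of_forall fun t ht => ?_
      rw [mem_Ioi] at ht
      obtain ⟨hnn, hub⟩ := hbv t ht
      have h1 : ‖Real.exp (-l * t) * varpi α m t‖ = Real.exp (-l * t) * varpi α m t := by
        rw [Real.norm_eq_abs, abs_of_nonneg (mul_nonneg (Real.exp_pos _).le hnn)]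
      have h2 : Real.exp (-l * t) * varpi α m t ≤
          Real.exp (-l * t) * (C * t ^ (m - 1) * Real.sqrt t * Real.exp (-t)) :=
        mul_le_mul_of_nonneg_left hub (Real.exp_pos _).le
      have h3 : Real.exp (-l * t) * (C * t ^ (m - 1) * Real.sqrt t * Real.exp (-t)) = g t := by
        have hpow : t ^ (((m - 1 : ℕ) : ℝ) + 1 / 2) = t ^ (m - 1) * Real.sqrt t := by
          rw [Real.rpow_add ht, Real.rpow_natCast, Real.sqrt_eq_rpow]
        rw [hg]
        simp only []
        rw [hpow, show Real.exp (-(1 + l) * t) = Real.exp (-l * t) * Real.exp (-t) by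
          rw [← Real.exp_add]; congr 1; ring]
        ring
      rw [h1, Real.norm_eq_abs]
      exact (h2.trans_eq h3).trans (le_abs_self _)
end
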